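/- For a mixture of two one-dimensional Gaussians with overall mean zero and parameters α = −μ₁μ₂, β = μ₁+μ₂, γ = (σ₂²−σ₁²)/(μ₂−μ₁), the excess fifth moment satisfies X₅ := M₅ − 10M₃M₂ = α(β³ − 8αβ + 10β²γ + 15γ²β − 20αγ). -/

import Mathlib

open MeasureTheory ProbabilityTheory Real
open scoped NNReal ENNReal

-- integrability of x^k * exp(-b x^2)
lemma aux_integrable_pow_gauss {b : ℝ} (hb : 0 < b) (k : ℕ) :
    Integrable fun x : ℝ => x ^ k * rexp (-b * x ^ 2) := by
  have h := integrable_rpow_mul_exp_neg_mul_sq hb (s := (k : ℝ))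
    (lt_of_lt_of_le neg_one_lt_zero (Nat.cast_nonneg k))
  simpa [Real.rpow_natCast] using h

-- odd moments vanish
lemma aux_odd_gauss (b : ℝ) {k : ℕ} (hk : Odd k) :
    ∫ x : ℝ, x ^ k * rexp (-b * x ^ 2) = 0 := by
  have h := integral_neg_eq_self (fun x : ℝ => x ^ k * rexp (-b * x ^ 2)) volume
  simp only [hk.neg_pow, neg_sq, neg_mul, integral_neg] at h
  simp only [neg_mul]
  linarith

lemma aux_Ioi (n : ℕ) {b : ℝ} (hb : 0 < b) :
    ∫ x in Set.Ioi (0:ℝ), x ^ n * rexp (-b * x ^ 2)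
      = b ^ (-((n : ℝ) + 1) / 2) * (1 / 2) * Real.Gamma (((n : ℝ) + 1) / 2) := by
  have h := integral_rpow_mul_exp_neg_mul_rpow (p := 2) (q := (n : ℝ)) two_pos
    (lt_of_lt_of_le neg_one_lt_zero (Nat.cast_nonneg n)) hb
  simpa [Real.rpow_natCast, Real.rpow_two] using h

lemma aux_even_double (f : ℝ → ℝ) (hf : ∀ x : ℝ, f (-x) = f x) :
    ∫ x : ℝ, f x = 2 * ∫ x in Set.Ioi (0:ℝ), f x := by
  rw [← integral_comp_abs (f := f)]
  congr 1
  ext x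
  rcases le_or_gt 0 x with h | h
  · rw [abs_of_nonneg h]
  · rw [abs_of_neg h, hf]

lemma aux_E0 {b : ℝ} (hb : 0 < b) :
    ∫ x : ℝ, rexp (-b * x ^ 2) = Real.sqrt π / Real.sqrt b := by
  rw [integral_gaussian, Real.sqrt_div pi_pos.le]

lemma aux_E2 {b : ℝ} (hb : 0 < b) :
    ∫ x : ℝ, x ^ 2 * rexp (-b * x ^ 2) = Real.sqrt π / Real.sqrt b / (2 * b) := by
  have h2 : ∫ x : ℝ, x ^ 2 * rexp (-b * x ^ 2)
      = 2 * ∫ x in Set.Ioi (0:ℝ), x ^ 2 * rexp (-b * x ^ 2) :=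
    aux_even_double _ (fun x => by ring_nf)
  have h3 := aux_Ioi 2 hb
  have hG2 : Real.Gamma (3/2) = Real.sqrt π / 2 := by
    rw [show (3:ℝ)/2 = 1/2 + 1 by norm_num, Real.Gamma_add_one (by norm_num),
      Real.Gamma_one_half_eq]
    ring
  have hbp : b ^ (-(((2:ℕ):ℝ) + 1) / 2) = (b * Real.sqrt b)⁻¹ := by
    rw [show (-(((2:ℕ):ℝ) + 1) / 2) = -(1 + 1/2) by norm_num, Real.rpow_neg hb.le,
      Real.rpow_add hb, Real.rpow_one, ← Real.sqrt_eq_rpow]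
  rw [h2, h3, hbp, show ((((2:ℕ):ℝ) + 1) / 2) = 3/2 by norm_num, hG2]
  have hsb : Real.sqrt b * Real.sqrt b = b := Real.mul_self_sqrt hb.le
  have hsbpos : (0:ℝ) < Real.sqrt b := Real.sqrt_pos.mpr hb
  field_simp

lemma aux_E4 {b : ℝ} (hb : 0 < b) :
    ∫ x : ℝ, x ^ 4 * rexp (-b * x ^ 2) = 3 * (Real.sqrt π / Real.sqrt b) / (4 * b ^ 2) := by
  have h2 : ∫ x : ℝ, x ^ 4 * rexp (-b * x ^ 2)
      = 2 * ∫ x in Set.Ioi (0:ℝ), x ^ 4 * rexp (-b * x ^ 2) :=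
    aux_even_double _ (fun x => by ring_nf)
  have h3 := aux_Ioi 4 hb
  have hG2 : Real.Gamma (5/2) = 3 * Real.sqrt π / 4 := by
    rw [show (5:ℝ)/2 = 3/2 + 1 by norm_num, Real.Gamma_add_one (by norm_num),
      show (3:ℝ)/2 = 1/2 + 1 by norm_num, Real.Gamma_add_one (by norm_num),
      Real.Gamma_one_half_eq]
    ring
  have hbp : b ^ (-(((4:ℕ):ℝ) + 1) / 2) = (b ^ 2 * Real.sqrt b)⁻¹ := by
    rw [show (-(((4:ℕ):ℝ) + 1) / 2) = -(2 + 1/2) by norm_num, Real.rpow_neg hb.le,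
      Real.rpow_add hb, ← Real.sqrt_eq_rpow, show (2:ℝ) = ((2:ℕ):ℝ) by norm_num,
      Real.rpow_natCast]
  rw [h2, h3, hbp, show ((((4:ℕ):ℝ) + 1) / 2) = 5/2 by norm_num, hG2]
  have hsb : Real.sqrt b * Real.sqrt b = b := Real.mul_self_sqrt hb.le
  have hsbpos : (0:ℝ) < Real.sqrt b := Real.sqrt_pos.mpr hb
  field_simp

lemma aux_int_gauss (μ : ℝ) {v : ℝ≥0} (hv : v ≠ 0) (f : ℝ → ℝ) :
    ∫ x, f x ∂(gaussianReal μ v) = ∫ x, gaussianPDFReal μ v x * f x := by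
  rw [gaussianReal_of_var_ne_zero μ hv, gaussianPDF_def]
  have h : (fun x => ENNReal.ofReal (gaussianPDFReal μ v x))
      = fun x => ((Real.toNNReal (gaussianPDFReal μ v x) : ℝ≥0) : ℝ≥0∞) := rfl
  rw [h, integral_withDensity_eq_integral_smul
    ((measurable_gaussianPDFReal μ v).real_toNNReal) f]
  congr 1
  ext x
  rw [NNReal.smul_def, smul_eq_mul, Real.coe_toNNReal _ (gaussianPDFReal_nonneg μ v x)]

lemma aux_pdf0 {v : ℝ≥0} (x : ℝ) :
    gaussianPDFReal 0 v x
      = (Real.sqrt (2 * π * (v:ℝ)))⁻¹ * rexp (-(2 * (v:ℝ))⁻¹ * x ^ 2) := by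
  simp only [gaussianPDFReal, sub_zero]
  rw [show -x ^ 2 / (2 * (v:ℝ)) = -(2 * (v:ℝ))⁻¹ * x ^ 2 by ring]

lemma aux_key0 {v : ℝ≥0} (hv : v ≠ 0) :
    (Real.sqrt (2 * π * (v:ℝ)))⁻¹
      * (Real.sqrt π / Real.sqrt ((2 * (v:ℝ))⁻¹)) = 1 := by
  have hv' : (0:ℝ) < v := lt_of_le_of_ne v.coe_nonneg (Ne.symm (NNReal.coe_ne_zero.mpr hv))
  rw [Real.sqrt_inv, div_inv_eq_mul, ← Real.sqrt_mul pi_pos.le,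
    show π * (2 * (v:ℝ)) = 2 * π * (v:ℝ) by ring,
    inv_mul_cancel₀ (ne_of_gt (Real.sqrt_pos.mpr (by positivity)))]

lemma aux_moment2 (μ : ℝ) (v : ℝ≥0) :
    ∫ x, x ^ 2 ∂(gaussianReal μ v) = μ ^ 2 + (v:ℝ) := by
  rcases eq_or_ne v 0 with rfl | hv
  · simp [gaussianReal_zero_var, integral_dirac]
  · have hv' : (0:ℝ) < v := lt_of_le_of_ne v.coe_nonneg (Ne.symm (NNReal.coe_ne_zero.mpr hv))
    have hb : (0:ℝ) < (2 * (v:ℝ))⁻¹ := by positivity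
    have hmap : (gaussianReal 0 v).map (fun x => x + μ) = gaussianReal μ v := by
      simpa using gaussianReal_map_add_const (μ := 0) (v := v) μ
    rw [← hmap, integral_map (measurable_add_const μ).aemeasurable
      (by fun_prop : AEStronglyMeasurable (fun x : ℝ => x ^ 2) _), aux_int_gauss 0 hv]
    rw [integral_congr_ae (g := fun x =>
        (Real.sqrt (2 * π * (v:ℝ)))⁻¹ *
          ((x ^ 2 * rexp (-(2 * (v:ℝ))⁻¹ * x ^ 2))
            + ((2 * μ) * (x ^ 1 * rexp (-(2 * (v:ℝ))⁻¹ * x ^ 2))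
              + μ ^ 2 * (x ^ 0 * rexp (-(2 * (v:ℝ))⁻¹ * x ^ 2)))))
      (Filter.Eventually.of_forall fun x => by rw [aux_pdf0]; ring)]
    have i0 := aux_integrable_pow_gauss hb 0
    have i1 := aux_integrable_pow_gauss hb 1
    have i2 := aux_integrable_pow_gauss hb 2
    have j1 : Integrable (fun x : ℝ => 2 * μ * (x ^ 1 * rexp (-(2 * (v:ℝ))⁻¹ * x ^ 2))) :=
      i1.const_mul _
    have j0 : Integrable (fun x : ℝ => μ ^ 2 * (x ^ 0 * rexp (-(2 * (v:ℝ))⁻¹ * x ^ 2))) :=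
      i0.const_mul _
    have j10 : Integrable (fun x : ℝ => 2 * μ * (x ^ 1 * rexp (-(2 * (v:ℝ))⁻¹ * x ^ 2))
        + μ ^ 2 * (x ^ 0 * rexp (-(2 * (v:ℝ))⁻¹ * x ^ 2))) := j1.add j0
    rw [integral_const_mul, integral_add i2 j10,
      integral_add j1 j0, integral_const_mul, integral_const_mul,
      aux_E2 hb, aux_odd_gauss _ odd_one]
    have e0 : ∫ x : ℝ, x ^ 0 * rexp (-(2 * (v:ℝ))⁻¹ * x ^ 2)
        = Real.sqrt π / Real.sqrt ((2 * (v:ℝ))⁻¹) := by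
      simpa using aux_E0 hb
    rw [e0]
    have h2b : Real.sqrt π / Real.sqrt ((2 * (v:ℝ))⁻¹) / (2 * (2 * (v:ℝ))⁻¹)
        = Real.sqrt π / Real.sqrt ((2 * (v:ℝ))⁻¹) * (v:ℝ) := by
      rw [div_eq_mul_inv (Real.sqrt π / Real.sqrt ((2 * (v:ℝ))⁻¹)),
        show (2 * (2 * (v:ℝ))⁻¹)⁻¹ = (v:ℝ) by field_simp]
    rw [h2b]
    have hS := aux_key0 hv
    linear_combination (μ ^ 2 + (v:ℝ)) * hS

lemma aux_moment3 (μ : ℝ) (v : ℝ≥0) :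
    ∫ x, x ^ 3 ∂(gaussianReal μ v) = μ ^ 3 + 3 * μ * (v:ℝ) := by
  rcases eq_or_ne v 0 with rfl | hv
  · simp [gaussianReal_zero_var, integral_dirac]
  · have hv' : (0:ℝ) < v := lt_of_le_of_ne v.coe_nonneg (Ne.symm (NNReal.coe_ne_zero.mpr hv))
    have hb : (0:ℝ) < (2 * (v:ℝ))⁻¹ := by positivity
    have hmap : (gaussianReal 0 v).map (fun x => x + μ) = gaussianReal μ v := by
      simpa using gaussianReal_map_add_const (μ := 0) (v := v) μ
    rw [← hmap, integral_map (measurable_add_const μ).aemeasurable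
      (by fun_prop : AEStronglyMeasurable (fun x : ℝ => x ^ 3) _), aux_int_gauss 0 hv]
    rw [integral_congr_ae (g := fun x =>
        (Real.sqrt (2 * π * (v:ℝ)))⁻¹ *
          ((x ^ 3 * rexp (-(2 * (v:ℝ))⁻¹ * x ^ 2))
            + ((3 * μ) * (x ^ 2 * rexp (-(2 * (v:ℝ))⁻¹ * x ^ 2))
              + ((3 * μ ^ 2) * (x ^ 1 * rexp (-(2 * (v:ℝ))⁻¹ * x ^ 2))
                + μ ^ 3 * (x ^ 0 * rexp (-(2 * (v:ℝ))⁻¹ * x ^ 2))))))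
      (Filter.Eventually.of_forall fun x => by rw [aux_pdf0]; ring)]
    have i0 := aux_integrable_pow_gauss hb 0
    have i1 := aux_integrable_pow_gauss hb 1
    have i2 := aux_integrable_pow_gauss hb 2
    have i3 := aux_integrable_pow_gauss hb 3
    have j2 : Integrable (fun x : ℝ => 3 * μ * (x ^ 2 * rexp (-(2 * (v:ℝ))⁻¹ * x ^ 2))) :=
      i2.const_mul _
    have j1 : Integrable (fun x : ℝ => 3 * μ ^ 2 * (x ^ 1 * rexp (-(2 * (v:ℝ))⁻¹ * x ^ 2))) :=
      i1.const_mul _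
    have j0 : Integrable (fun x : ℝ => μ ^ 3 * (x ^ 0 * rexp (-(2 * (v:ℝ))⁻¹ * x ^ 2))) :=
      i0.const_mul _
    have j10 : Integrable (fun x : ℝ => 3 * μ ^ 2 * (x ^ 1 * rexp (-(2 * (v:ℝ))⁻¹ * x ^ 2))
        + μ ^ 3 * (x ^ 0 * rexp (-(2 * (v:ℝ))⁻¹ * x ^ 2))) := j1.add j0
    have j210 : Integrable (fun x : ℝ => 3 * μ * (x ^ 2 * rexp (-(2 * (v:ℝ))⁻¹ * x ^ 2))
        + (3 * μ ^ 2 * (x ^ 1 * rexp (-(2 * (v:ℝ))⁻¹ * x ^ 2))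
          + μ ^ 3 * (x ^ 0 * rexp (-(2 * (v:ℝ))⁻¹ * x ^ 2)))) := j2.add j10
    rw [integral_const_mul, integral_add i3 j210, integral_add j2 j10, integral_add j1 j0,
      integral_const_mul, integral_const_mul, integral_const_mul,
      aux_E2 hb, aux_odd_gauss _ (by decide : Odd 3), aux_odd_gauss _ odd_one]
    have e0 : ∫ x : ℝ, x ^ 0 * rexp (-(2 * (v:ℝ))⁻¹ * x ^ 2)
        = Real.sqrt π / Real.sqrt ((2 * (v:ℝ))⁻¹) := by
      simpa using aux_E0 hb
    rw [e0]
    have h2b : Real.sqrt π / Real.sqrt ((2 * (v:ℝ))⁻¹) / (2 * (2 * (v:ℝ))⁻¹)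
        = Real.sqrt π / Real.sqrt ((2 * (v:ℝ))⁻¹) * (v:ℝ) := by
      rw [div_eq_mul_inv (Real.sqrt π / Real.sqrt ((2 * (v:ℝ))⁻¹)),
        show (2 * (2 * (v:ℝ))⁻¹)⁻¹ = (v:ℝ) by field_simp]
    rw [h2b]
    have hS := aux_key0 hv
    linear_combination (μ ^ 3 + 3 * μ * (v:ℝ)) * hS

lemma aux_moment5 (μ : ℝ) (v : ℝ≥0) :
    ∫ x, x ^ 5 ∂(gaussianReal μ v)
      = μ ^ 5 + 10 * μ ^ 3 * (v:ℝ) + 15 * μ * (v:ℝ) ^ 2 := by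
  rcases eq_or_ne v 0 with rfl | hv
  · simp [gaussianReal_zero_var, integral_dirac]
  · have hv' : (0:ℝ) < v := lt_of_le_of_ne v.coe_nonneg (Ne.symm (NNReal.coe_ne_zero.mpr hv))
    have hb : (0:ℝ) < (2 * (v:ℝ))⁻¹ := by positivity
    have hmap : (gaussianReal 0 v).map (fun x => x + μ) = gaussianReal μ v := by
      simpa using gaussianReal_map_add_const (μ := 0) (v := v) μ
    rw [← hmap, integral_map (measurable_add_const μ).aemeasurable
      (by fun_prop : AEStronglyMeasurable (fun x : ℝ => x ^ 5) _), aux_int_gauss 0 hv]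
    rw [integral_congr_ae (g := fun x =>
        (Real.sqrt (2 * π * (v:ℝ)))⁻¹ *
          ((x ^ 5 * rexp (-(2 * (v:ℝ))⁻¹ * x ^ 2))
            + ((5 * μ) * (x ^ 4 * rexp (-(2 * (v:ℝ))⁻¹ * x ^ 2))
              + ((10 * μ ^ 2) * (x ^ 3 * rexp (-(2 * (v:ℝ))⁻¹ * x ^ 2))
                + ((10 * μ ^ 3) * (x ^ 2 * rexp (-(2 * (v:ℝ))⁻¹ * x ^ 2))
                  + ((5 * μ ^ 4) * (x ^ 1 * rexp (-(2 * (v:ℝ))⁻¹ * x ^ 2))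
                    + μ ^ 5 * (x ^ 0 * rexp (-(2 * (v:ℝ))⁻¹ * x ^ 2))))))))
      (Filter.Eventually.of_forall fun x => by rw [aux_pdf0]; ring)]
    have i0 := aux_integrable_pow_gauss hb 0
    have i1 := aux_integrable_pow_gauss hb 1
    have i2 := aux_integrable_pow_gauss hb 2
    have i3 := aux_integrable_pow_gauss hb 3
    have i4 := aux_integrable_pow_gauss hb 4
    have i5 := aux_integrable_pow_gauss hb 5
    have j4 : Integrable (fun x : ℝ => 5 * μ * (x ^ 4 * rexp (-(2 * (v:ℝ))⁻¹ * x ^ 2))) :=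
      i4.const_mul _
    have j3 : Integrable (fun x : ℝ => 10 * μ ^ 2 * (x ^ 3 * rexp (-(2 * (v:ℝ))⁻¹ * x ^ 2))) :=
      i3.const_mul _
    have j2 : Integrable (fun x : ℝ => 10 * μ ^ 3 * (x ^ 2 * rexp (-(2 * (v:ℝ))⁻¹ * x ^ 2))) :=
      i2.const_mul _
    have j1 : Integrable (fun x : ℝ => 5 * μ ^ 4 * (x ^ 1 * rexp (-(2 * (v:ℝ))⁻¹ * x ^ 2))) :=
      i1.const_mul _
    have j0 : Integrable (fun x : ℝ => μ ^ 5 * (x ^ 0 * rexp (-(2 * (v:ℝ))⁻¹ * x ^ 2))) :=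
      i0.const_mul _
    have j10 : Integrable (fun x : ℝ => 5 * μ ^ 4 * (x ^ 1 * rexp (-(2 * (v:ℝ))⁻¹ * x ^ 2))
        + μ ^ 5 * (x ^ 0 * rexp (-(2 * (v:ℝ))⁻¹ * x ^ 2))) := j1.add j0
    have j210 : Integrable (fun x : ℝ => 10 * μ ^ 3 * (x ^ 2 * rexp (-(2 * (v:ℝ))⁻¹ * x ^ 2))
        + (5 * μ ^ 4 * (x ^ 1 * rexp (-(2 * (v:ℝ))⁻¹ * x ^ 2))
          + μ ^ 5 * (x ^ 0 * rexp (-(2 * (v:ℝ))⁻¹ * x ^ 2)))) := j2.add j10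
    have j3210 : Integrable (fun x : ℝ => 10 * μ ^ 2 * (x ^ 3 * rexp (-(2 * (v:ℝ))⁻¹ * x ^ 2))
        + (10 * μ ^ 3 * (x ^ 2 * rexp (-(2 * (v:ℝ))⁻¹ * x ^ 2))
          + (5 * μ ^ 4 * (x ^ 1 * rexp (-(2 * (v:ℝ))⁻¹ * x ^ 2))
            + μ ^ 5 * (x ^ 0 * rexp (-(2 * (v:ℝ))⁻¹ * x ^ 2))))) := j3.add j210
    have j43210 : Integrable (fun x : ℝ => 5 * μ * (x ^ 4 * rexp (-(2 * (v:ℝ))⁻¹ * x ^ 2))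
        + (10 * μ ^ 2 * (x ^ 3 * rexp (-(2 * (v:ℝ))⁻¹ * x ^ 2))
          + (10 * μ ^ 3 * (x ^ 2 * rexp (-(2 * (v:ℝ))⁻¹ * x ^ 2))
            + (5 * μ ^ 4 * (x ^ 1 * rexp (-(2 * (v:ℝ))⁻¹ * x ^ 2))
              + μ ^ 5 * (x ^ 0 * rexp (-(2 * (v:ℝ))⁻¹ * x ^ 2)))))) := j4.add j3210
    rw [integral_const_mul, integral_add i5 j43210, integral_add j4 j3210,
      integral_add j3 j210, integral_add j2 j10, integral_add j1 j0,
      integral_const_mul, integral_const_mul, integral_const_mul, integral_const_mul,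
      integral_const_mul, aux_E2 hb, aux_E4 hb, aux_odd_gauss _ (by decide : Odd 5),
      aux_odd_gauss _ (by decide : Odd 3), aux_odd_gauss _ odd_one]
    have e0 : ∫ x : ℝ, x ^ 0 * rexp (-(2 * (v:ℝ))⁻¹ * x ^ 2)
        = Real.sqrt π / Real.sqrt ((2 * (v:ℝ))⁻¹) := by
      simpa using aux_E0 hb
    rw [e0]
    have h2b : Real.sqrt π / Real.sqrt ((2 * (v:ℝ))⁻¹) / (2 * (2 * (v:ℝ))⁻¹)
        = Real.sqrt π / Real.sqrt ((2 * (v:ℝ))⁻¹) * (v:ℝ) := by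
      rw [div_eq_mul_inv (Real.sqrt π / Real.sqrt ((2 * (v:ℝ))⁻¹)),
        show (2 * (2 * (v:ℝ))⁻¹)⁻¹ = (v:ℝ) by field_simp]
    have h4b : 3 * (Real.sqrt π / Real.sqrt ((2 * (v:ℝ))⁻¹)) / (4 * ((2 * (v:ℝ))⁻¹) ^ 2)
        = Real.sqrt π / Real.sqrt ((2 * (v:ℝ))⁻¹) * (3 * (v:ℝ) ^ 2) := by
      rw [div_eq_mul_inv (3 * (Real.sqrt π / Real.sqrt ((2 * (v:ℝ))⁻¹))),
        show (4 * ((2 * (v:ℝ))⁻¹) ^ 2)⁻¹ = (v:ℝ) ^ 2 by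
          rw [show (4 * ((2 * (v:ℝ))⁻¹) ^ 2) = ((v:ℝ) ^ 2)⁻¹ by field_simp; ring, inv_inv]]
      ring
    rw [h2b, h4b]
    have hS := aux_key0 hv
    linear_combination (μ ^ 5 + 10 * μ ^ 3 * (v:ℝ) + 15 * μ * (v:ℝ) ^ 2) * hS

/-- Excess fifth moment of a zero-mean mixture of two Gaussians:
`X₅ := M₅ − 10M₃M₂ = α(β³ − 8αβ + 10β²γ + 15γ²β − 20αγ)`. -/
theorem mixture_excess_fifth_moment (p₁ p₂ μ₁ μ₂ : ℝ) (v₁ v₂ : NNReal)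
    (hp₁ : 0 < p₁) (hp₂ : 0 < p₂) (hsum : p₁ + p₂ = 1)
    (hmean : p₁ * μ₁ + p₂ * μ₂ = 0) (hne : μ₁ ≠ μ₂)
    (α β γ : ℝ) (hα : α = -(μ₁ * μ₂)) (hβ : β = μ₁ + μ₂)
    (hγ : γ = ((v₂ : ℝ) - (v₁ : ℝ)) / (μ₂ - μ₁))
    (M₂ M₃ M₅ : ℝ)
    (hM₂ : M₂ = p₁ * ∫ x, x ^ 2 ∂(gaussianReal μ₁ v₁)
        + p₂ * ∫ x, x ^ 2 ∂(gaussianReal μ₂ v₂))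
    (hM₃ : M₃ = p₁ * ∫ x, x ^ 3 ∂(gaussianReal μ₁ v₁)
        + p₂ * ∫ x, x ^ 3 ∂(gaussianReal μ₂ v₂))
    (hM₅ : M₅ = p₁ * ∫ x, x ^ 5 ∂(gaussianReal μ₁ v₁)
        + p₂ * ∫ x, x ^ 5 ∂(gaussianReal μ₂ v₂)) :
    M₅ - 10 * M₃ * M₂
      = α * (β ^ 3 - 8 * α * β + 10 * β ^ 2 * γ + 15 * γ ^ 2 * β - 20 * α * γ) := by
  have hd : μ₂ - μ₁ ≠ 0 := sub_ne_zero_of_ne (Ne.symm hne)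
  have e1 : p₁ = μ₂ / (μ₂ - μ₁) := by
    rw [eq_div_iff hd]
    linear_combination -hmean + μ₂ * hsum
  have e2 : p₂ = -μ₁ / (μ₂ - μ₁) := by
    rw [eq_div_iff hd]
    linear_combination hmean - μ₁ * hsum
  have e3 : (v₂ : ℝ) = (v₁ : ℝ) + γ * (μ₂ - μ₁) := by
    rw [hγ]
    field_simp
    ring
  rw [hM₂, hM₃, hM₅, aux_moment2, aux_moment2, aux_moment3, aux_moment3,
    aux_moment5, aux_moment5, hα, hβ, e1, e2, e3]
  field_simp
  ring
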